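/- Let n ≥ 0 be even, d ≥ 2, let ζ ∈ ℂ be a primitive 2d-th root of unity, and let α_0, α_2, …, α_n and β_0, β_2, …, β_n be odd integers in {1, 3, …, 2d−1}. Define P_α := d^{n/2+1} ζ^{α_0 + α_2 + ⋯ + α_n} Π_{j=1}^{n/2+1} ( Σ_{l=0}^{d−2} x_{2j−2}^{d−2−l} ζ^{α_{2j−2} l} x_{2j−1}^{l} ) and P_β analogously with the β's. Let m + 1 := #{ j ∈ {1, …, n/2+1} : α_{2j−2} = β_{2j−2} }. Then P_α · P_β ≡ (1−d)^{m+1} · d^{n+2} · (x_0 x_1 ⋯ x_{n+1})^{d−2} modulo the ideal ⟨x_0^{d−1}, …, x_{n+1}^{d−1}⟩ of ℂ[x_0, …, x_{n+1}]. -/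

import Mathlib

open MvPolynomial
open Fin.NatCast
lemma prod_pairs' {M : Type*} [CommMonoid M] (f : ℕ → M) (t : ℕ) :
    ∏ k ∈ Finset.range (2 * t), f k = ∏ j ∈ Finset.range t, (f (2*j) * f (2*j+1)) := by
  induction t with
  | zero => simp
  | succ t ih =>
    rw [Finset.prod_range_succ, show 2*(t+1) = (2*t+1)+1 by ring, Finset.prod_range_succ,
      Finset.prod_range_succ, ih, mul_assoc]

lemma Xpow_mem' {N d : ℕ} (a : Fin N) {e : ℕ} (he : d - 1 ≤ e) :
    (X a : MvPolynomial (Fin N) ℂ) ^ e ∈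
      Ideal.span (Set.range fun k : Fin N => (X k : MvPolynomial (Fin N) ℂ) ^ (d - 1)) := by
  have h : (X a : MvPolynomial (Fin N) ℂ) ^ e = X a ^ (d-1) * X a ^ (e - (d-1)) := by
    rw [← pow_add]; congr 1; omega
  rw [h]
  exact Ideal.mul_mem_right _ _ (Ideal.subset_span ⟨a, rfl⟩)

lemma zeta_d_eq_neg_one' {d : ℕ} (hd : 2 ≤ d) {ζ : ℂ} (hζ : IsPrimitiveRoot ζ (2*d)) :
    ζ ^ d = -1 := by
  have h1 : ζ^(2*d) = 1 := hζ.pow_eq_one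
  have h2 : ζ^d ≠ 1 := hζ.pow_ne_one_of_pos_of_lt (by omega) (by omega)
  have h3 : (ζ^d - 1) * (ζ^d + 1) = 0 := by
    have h4 : (ζ^d)^2 = 1 := by rw [← pow_mul, mul_comm]; exact h1
    linear_combination h4
  rcases mul_eq_zero.mp h3 with h | h
  · exact absurd (by linear_combination h) h2
  · linear_combination h

lemma scalar' {d : ℕ} (hd : 2 ≤ d) {ζ : ℂ} (hζ : IsPrimitiveRoot ζ (2*d))
    {u v : ℕ} (hu : Odd u) (hu2 : u ≤ 2*d-1) (hv : Odd v) (hv2 : v ≤ 2*d-1) :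
    ζ^(u+v) * ∑ l ∈ Finset.range (d-1), ζ^(u*l + v*(d-2-l)) =
      if u = v then 1 - (d:ℂ) else 1 := by
  have hz0 : ζ ≠ 0 := hζ.ne_zero (by omega)
  have hzd : ζ ^ d = -1 := zeta_d_eq_neg_one' hd hζ
  have hud : ζ ^ (u * d) = -1 := by
    rw [mul_comm, pow_mul, hzd, hu.neg_one_pow]
  by_cases huv : u = v
  · subst huv
    simp only [if_pos rfl]
    have : ∀ l ∈ Finset.range (d-1), ζ^(u*l + u*(d-2-l)) = ζ^(u*(d-2)) := by
      intro l hl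
      simp only [Finset.mem_range] at hl
      congr 1
      have : l + (d-2-l) = d - 2 := by omega
      rw [← Nat.mul_add, this]
    rw [Finset.sum_congr rfl this, Finset.sum_const, Finset.card_range, nsmul_eq_mul]
    have he : ζ^(u+u) * ζ^(u*(d-2)) = ζ^(u*d) := by
      rw [← pow_add]; congr 1
      obtain ⟨k, hk⟩ := Nat.exists_eq_add_of_le hd
      subst hk
      rw [show 2+k-2 = k from by omega]; ring
    calc ζ^(u+u) * (((d:ℕ)-1 : ℕ) * ζ^(u*(d-2)))
        = ((d-1 : ℕ) : ℂ) * (ζ^(u+u) * ζ^(u*(d-2))) := by ring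
      _ = ((d-1 : ℕ) : ℂ) * ζ^(u*d) := by rw [he]
      _ = 1 - (d:ℂ) := by
          rw [hud, Nat.cast_sub (by omega : 1 ≤ d)]; push_cast; ring
  · simp only [if_neg huv]
    have hu1 : 1 ≤ u := by rcases Nat.odd_iff.mp hu with h; omega
    have hv1 : 1 ≤ v := by rcases Nat.odd_iff.mp hv with h; omega
    set w : ℤ := (u : ℤ) - v with hw
    have hwe : Even w := by
      rcases hu with ⟨p, hp⟩; rcases hv with ⟨q, hq⟩
      exact ⟨(p:ℤ) - q, by rw [hw, hp, hq]; push_cast; ring⟩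
    have hwne : ¬ ((2*(d:ℤ)) ∣ w) := by
      intro hdvd
      have hlt : w.natAbs < (2*(d:ℤ)).natAbs := by
        clear hdvd
        have h2 : (2*(d:ℤ)).natAbs = 2*d := by
          rw [show (2*(d:ℤ)) = ((2*d:ℕ):ℤ) by push_cast; ring, Int.natAbs_natCast]
        rw [h2, hw]
        rcases Int.natAbs_eq ((u:ℤ) - v) with h | h <;> omega
      have h0 := Int.eq_zero_of_dvd_of_natAbs_lt_natAbs hdvd hlt
      rw [hw, sub_eq_zero] at h0
      exact huv (by exact_mod_cast h0)
    set ω : ℂ := ζ ^ w with hω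
    have hω1 : ω ≠ 1 := fun h => hwne ((hζ.zpow_eq_one_iff_dvd w).mp h)
    have hωd : ω ^ d = 1 := by
      rw [hω, ← zpow_natCast (ζ ^ w) d, ← zpow_mul]
      apply (hζ.zpow_eq_one_iff_dvd _).mpr
      obtain ⟨r, hr⟩ := hwe
      exact ⟨r, by rw [hr]; push_cast; ring⟩
    have hgeom : ∑ l ∈ Finset.range d, ω ^ l = 0 := by
      have hg := geom_sum_eq hω1 d
      rw [hg, hωd]; simp
    have hsum : ∑ l ∈ Finset.range (d-1), ω ^ l = -ω^(d-1) := by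
      have hsplit := Finset.sum_range_succ (fun l => ω^l) (d-1)
      rw [show d - 1 + 1 = d from by omega] at hsplit
      rw [hsplit] at hgeom
      linear_combination hgeom
    have hterm : ∀ l ∈ Finset.range (d-1),
        ζ^(u*l + v*(d-2-l)) = ζ^((v:ℤ)*((d:ℤ)-2)) * ω^l := by
      intro l hl
      simp only [Finset.mem_range] at hl
      rw [hω, ← zpow_natCast (ζ^w) l, ← zpow_mul, ← zpow_add₀ hz0,
        ← zpow_natCast ζ (u*l + v*(d-2-l))]
      congr 1
      have h1 : ((d-2-l : ℕ) : ℤ) = (d:ℤ) - 2 - l := by omega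
      push_cast [h1, hw]
      ring
    rw [Finset.sum_congr rfl hterm, ← Finset.mul_sum, hsum]
    have e1 : ω^(d-1) = ζ^(w*((d:ℤ)-1)) := by
      rw [hω, ← zpow_natCast (ζ^w) (d-1), ← zpow_mul]
      congr 1
      have h2 : ((d-1 : ℕ) : ℤ) = (d:ℤ) - 1 := by omega
      rw [h2]
    have e2 : ζ^(u+v) = ζ^((u:ℤ)+v) := by
      rw [show (u:ℤ)+v = ((u+v:ℕ):ℤ) by push_cast; ring, zpow_natCast]
    rw [e1, e2, mul_neg, ← zpow_add₀ hz0, mul_neg, ← zpow_add₀ hz0]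
    have e3 : (u:ℤ)+v + ((v:ℤ)*((d:ℤ)-2) + w*((d:ℤ)-1)) = (u:ℤ)*d := by
      rw [hw]; ring
    rw [e3, show ((u:ℤ)*d) = ((u*d:ℕ):ℤ) by push_cast; ring, zpow_natCast, hud]
    ring

lemma pair' {N d : ℕ} (hd : 2 ≤ d) (a b : Fin N) (ζ : ℂ) (u v : ℕ) :
    Ideal.Quotient.mk
        (Ideal.span (Set.range fun k : Fin N => (X k : MvPolynomial (Fin N) ℂ) ^ (d - 1)))
      ((∑ l ∈ Finset.range (d-1), X a ^ (d-2-l) * C (ζ^(u*l)) * X b ^ l) *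
       (∑ l ∈ Finset.range (d-1), X a ^ (d-2-l) * C (ζ^(v*l)) * X b ^ l)) =
    Ideal.Quotient.mk _
      (C (∑ l ∈ Finset.range (d-1), ζ^(u*l + v*(d-2-l))) * (X a ^ (d-2) * X b ^ (d-2))) := by
  set I := Ideal.span (Set.range fun k : Fin N => (X k : MvPolynomial (Fin N) ℂ) ^ (d - 1)) with hI
  rw [Finset.sum_mul_sum]
  rw [map_sum]
  simp only [map_sum]
  have hinner : ∀ l ∈ Finset.range (d-1),
      (∑ l' ∈ Finset.range (d-1), Ideal.Quotient.mk I
        ((X a ^ (d-2-l) * C (ζ^(u*l)) * X b ^ l) * (X a ^ (d-2-l') * C (ζ^(v*l')) * X b ^ l')))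
      = Ideal.Quotient.mk I (C (ζ^(u*l + v*(d-2-l))) * (X a ^ (d-2) * X b ^ (d-2))) := by
    intro l hl
    simp only [Finset.mem_range] at hl
    have hdiag : Ideal.Quotient.mk I
        ((X a ^ (d-2-l) * C (ζ^(u*l)) * X b ^ l) *
          (X a ^ (d-2-(d-2-l)) * C (ζ^(v*(d-2-l))) * X b ^ (d-2-l)))
        = Ideal.Quotient.mk I (C (ζ^(u*l + v*(d-2-l))) * (X a ^ (d-2) * X b ^ (d-2))) := by
      congr 1
      have e0 : d-2-(d-2-l) = l := by omega
      rw [e0]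
      have e1 : (X a : MvPolynomial (Fin N) ℂ) ^ (d-2-l) * X a ^ l = X a ^ (d-2) := by
        rw [← pow_add]; congr 1; omega
      have e2 : (X b : MvPolynomial (Fin N) ℂ) ^ l * X b ^ (d-2-l) = X b ^ (d-2) := by
        rw [← pow_add]; congr 1; omega
      calc X a ^ (d-2-l) * C (ζ^(u*l)) * X b ^ l * (X a ^ l * C (ζ^(v*(d-2-l))) * X b ^ (d-2-l))
          = C (ζ^(u*l) * ζ^(v*(d-2-l))) *
              ((X a ^ (d-2-l) * X a ^ l) * (X b ^ l * X b ^ (d-2-l))) := by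
            rw [C_mul]; ring
        _ = C (ζ^(u*l + v*(d-2-l))) * (X a ^ (d-2) * X b ^ (d-2)) := by
            rw [e1, e2, ← pow_add]
    have hzero : ∀ l' ∈ Finset.range (d-1), l' ≠ d-2-l →
        Ideal.Quotient.mk I
          ((X a ^ (d-2-l) * C (ζ^(u*l)) * X b ^ l) *
            (X a ^ (d-2-l') * C (ζ^(v*l')) * X b ^ l')) = 0 := by
      intro l' hl' hne
      simp only [Finset.mem_range] at hl'
      rw [Ideal.Quotient.eq_zero_iff_mem]
      rcases lt_or_gt_of_ne (show l + l' ≠ d - 2 from fun h => hne (by omega)) with hlt | hgt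
      · have hre : X a ^ (d-2-l) * C (ζ^(u*l)) * X b ^ l *
              (X a ^ (d-2-l') * C (ζ^(v*l')) * X b ^ l')
            = X a ^ ((d-2-l) + (d-2-l')) *
                (C (ζ^(u*l)) * C (ζ^(v*l')) * (X b ^ l * X b ^ l')) := by
          rw [pow_add]; ring
        rw [hre]
        exact Ideal.mul_mem_right _ _ (Xpow_mem' a (by omega))
      · have hre : X a ^ (d-2-l) * C (ζ^(u*l)) * X b ^ l *
              (X a ^ (d-2-l') * C (ζ^(v*l')) * X b ^ l')
            = X b ^ (l + l') *
                (C (ζ^(u*l)) * C (ζ^(v*l')) * (X a ^ (d-2-l) * X a ^ (d-2-l'))) := by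
          rw [pow_add]; ring
        rw [hre]
        exact Ideal.mul_mem_right _ _ (Xpow_mem' b (by omega))
    rw [Finset.sum_eq_single_of_mem (d-2-l) (Finset.mem_range.mpr (by omega)) hzero, hdiag]
  rw [Finset.sum_congr rfl hinner, Finset.sum_mul, map_sum]

theorem linear_cycle_polys_product_mod_jacobian (n d : ℕ) (hn : Even n) (hd : 2 ≤ d)
    (ζ : ℂ) (hζ : IsPrimitiveRoot ζ (2 * d))
    (α β : ℕ → ℕ)
    (hα : ∀ j ≤ n / 2, Odd (α (2 * j)) ∧ 1 ≤ α (2 * j) ∧ α (2 * j) ≤ 2 * d - 1)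
    (hβ : ∀ j ≤ n / 2, Odd (β (2 * j)) ∧ 1 ≤ β (2 * j) ∧ β (2 * j) ≤ 2 * d - 1)
    (Pα Pβ : MvPolynomial (Fin (n + 2)) ℂ)
    (hPα : Pα = C ((d : ℂ) ^ (n / 2 + 1) * ζ ^ (∑ j ∈ Finset.range (n / 2 + 1), α (2 * j))) *
      ∏ j ∈ Finset.range (n / 2 + 1), ∑ l ∈ Finset.range (d - 1),
        (X ((2 * j : ℕ) : Fin (n + 2))) ^ (d - 2 - l) * C (ζ ^ (α (2 * j) * l)) *
          (X ((2 * j + 1 : ℕ) : Fin (n + 2))) ^ l)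
    (hPβ : Pβ = C ((d : ℂ) ^ (n / 2 + 1) * ζ ^ (∑ j ∈ Finset.range (n / 2 + 1), β (2 * j))) *
      ∏ j ∈ Finset.range (n / 2 + 1), ∑ l ∈ Finset.range (d - 1),
        (X ((2 * j : ℕ) : Fin (n + 2))) ^ (d - 2 - l) * C (ζ ^ (β (2 * j) * l)) *
          (X ((2 * j + 1 : ℕ) : Fin (n + 2))) ^ l)
    (m : ℕ)
    (hm : m + 1 =
      ((Finset.range (n / 2 + 1)).filter fun j => α (2 * j) = β (2 * j)).card) :
    Pα * Pβ -
        C ((1 - (d : ℂ)) ^ (m + 1) * (d : ℂ) ^ (n + 2)) *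
          (∏ k : Fin (n + 2), (X k : MvPolynomial (Fin (n + 2)) ℂ)) ^ (d - 2) ∈
      Ideal.span
        (Set.range fun k : Fin (n + 2) => (X k : MvPolynomial (Fin (n + 2)) ℂ) ^ (d - 1)) := by
  obtain ⟨t, ht⟩ := hn
  have hnt : n = 2 * t := by omega
  subst hPα hPβ
  rw [← Ideal.Quotient.eq]
  set I : Ideal (MvPolynomial (Fin (n + 2)) ℂ) :=
    Ideal.span (Set.range fun k : Fin (n + 2) => (X k : MvPolynomial (Fin (n + 2)) ℂ) ^ (d - 1))
    with hIdef
  set R := Finset.range (n / 2 + 1) with hR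
  set Sα : ℕ → MvPolynomial (Fin (n + 2)) ℂ := fun j => ∑ l ∈ Finset.range (d - 1),
    (X ((2 * j : ℕ) : Fin (n + 2))) ^ (d - 2 - l) * C (ζ ^ (α (2 * j) * l)) *
      (X ((2 * j + 1 : ℕ) : Fin (n + 2))) ^ l with hSα
  set Sβ : ℕ → MvPolynomial (Fin (n + 2)) ℂ := fun j => ∑ l ∈ Finset.range (d - 1),
    (X ((2 * j : ℕ) : Fin (n + 2))) ^ (d - 2 - l) * C (ζ ^ (β (2 * j) * l)) *
      (X ((2 * j + 1 : ℕ) : Fin (n + 2))) ^ l with hSβ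
  set σp : ℕ → ℂ := fun j =>
    ∑ l ∈ Finset.range (d - 1), ζ ^ (α (2 * j) * l + β (2 * j) * (d - 2 - l)) with hσp
  set XX : ℕ → MvPolynomial (Fin (n + 2)) ℂ := fun j =>
    (X ((2 * j : ℕ) : Fin (n + 2))) ^ (d - 2) * (X ((2 * j + 1 : ℕ) : Fin (n + 2))) ^ (d - 2)
    with hXX
  set cc : ℂ := (d : ℂ) ^ (n / 2 + 1) * ζ ^ (∑ j ∈ R, α (2 * j)) *
    ((d : ℂ) ^ (n / 2 + 1) * ζ ^ (∑ j ∈ R, β (2 * j))) with hcc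
  -- step 1: rearrange the left side
  have h1 : C ((d : ℂ) ^ (n / 2 + 1) * ζ ^ (∑ j ∈ R, α (2 * j))) * R.prod Sα *
      (C ((d : ℂ) ^ (n / 2 + 1) * ζ ^ (∑ j ∈ R, β (2 * j))) * R.prod Sβ) =
      C cc * ∏ j ∈ R, (Sα j * Sβ j) := by
    rw [Finset.prod_mul_distrib, hcc]
    simp only [map_mul]
    ring
  rw [h1, map_mul, map_prod]
  have h2 : ∀ j ∈ R, Ideal.Quotient.mk I (Sα j * Sβ j) =
      Ideal.Quotient.mk I (C (σp j) * XX j) := by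
    intro j _
    exact pair' hd _ _ ζ _ _
  rw [Finset.prod_congr rfl h2, ← map_prod, ← map_mul]
  -- now an honest polynomial identity
  congr 1
  -- the scalar computation
  have hsc : ∀ j ∈ R, ζ ^ (α (2 * j) + β (2 * j)) * σp j =
      if α (2 * j) = β (2 * j) then 1 - (d : ℂ) else 1 := by
    intro j hj
    have hj' : j ≤ n / 2 := by
      rw [hR] at hj; simp only [Finset.mem_range] at hj; omega
    exact scalar' hd hζ (hα j hj').1 (hα j hj').2.2 (hβ j hj').1 (hβ j hj').2.2
  have hprod : ∏ j ∈ R, (ζ ^ (α (2 * j) + β (2 * j)) * σp j) = (1 - (d : ℂ)) ^ (m + 1) := by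
    rw [Finset.prod_congr rfl hsc, Finset.prod_ite, Finset.prod_const, Finset.prod_const_one,
      mul_one, hm]
  have hz : ζ ^ (∑ j ∈ R, α (2 * j)) * ζ ^ (∑ j ∈ R, β (2 * j)) =
      ∏ j ∈ R, ζ ^ (α (2 * j) + β (2 * j)) := by
    rw [Finset.prod_pow_eq_pow_sum, ← pow_add, Finset.sum_add_distrib]
  have hdd : (d : ℂ) ^ (n / 2 + 1) * (d : ℂ) ^ (n / 2 + 1) = (d : ℂ) ^ (n + 2) := by
    rw [← pow_add]; congr 1; omega
  have hconst : cc * ∏ j ∈ R, σp j = (1 - (d : ℂ)) ^ (m + 1) * (d : ℂ) ^ (n + 2) := by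
    calc cc * ∏ j ∈ R, σp j
        = ((d : ℂ) ^ (n / 2 + 1) * (d : ℂ) ^ (n / 2 + 1)) *
            ((ζ ^ (∑ j ∈ R, α (2 * j)) * ζ ^ (∑ j ∈ R, β (2 * j))) * ∏ j ∈ R, σp j) := by
          rw [hcc]; ring
      _ = (d : ℂ) ^ (n + 2) * ((∏ j ∈ R, ζ ^ (α (2 * j) + β (2 * j))) * ∏ j ∈ R, σp j) := by
          rw [hdd, hz]
      _ = (d : ℂ) ^ (n + 2) * ∏ j ∈ R, (ζ ^ (α (2 * j) + β (2 * j)) * σp j) := by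
          rw [Finset.prod_mul_distrib]
      _ = (1 - (d : ℂ)) ^ (m + 1) * (d : ℂ) ^ (n + 2) := by rw [hprod]; ring
  -- the monomial computation
  have hX : (∏ k : Fin (n + 2), (X k : MvPolynomial (Fin (n + 2)) ℂ)) ^ (d - 2) =
      ∏ j ∈ R, XX j := by
    rw [← Finset.prod_pow]
    have hcast : ∀ k : Fin (n + 2), (X k : MvPolynomial (Fin (n + 2)) ℂ) ^ (d - 2) =
        (X (((k : ℕ) : Fin (n + 2))) : MvPolynomial (Fin (n + 2)) ℂ) ^ (d - 2) := by
      intro k; rw [Fin.cast_val_eq_self]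
    rw [Finset.prod_congr rfl (fun k _ => hcast k),
      Fin.prod_univ_eq_prod_range
        (fun i => (X ((i : ℕ) : Fin (n + 2)) : MvPolynomial (Fin (n + 2)) ℂ) ^ (d - 2)) (n + 2)]
    have hp := prod_pairs'
      (fun i => (X ((i : ℕ) : Fin (n + 2)) : MvPolynomial (Fin (n + 2)) ℂ) ^ (d - 2))
      (n / 2 + 1)
    rw [show 2 * (n / 2 + 1) = n + 2 from by omega] at hp
    rw [hp]
  calc C cc * ∏ j ∈ R, (C (σp j) * XX j)
      = C cc * (C (∏ j ∈ R, σp j) * ∏ j ∈ R, XX j) := by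
        rw [Finset.prod_mul_distrib, map_prod]
    _ = C (cc * ∏ j ∈ R, σp j) * ∏ j ∈ R, XX j := by rw [← mul_assoc, ← map_mul]
    _ = C ((1 - (d : ℂ)) ^ (m + 1) * (d : ℂ) ^ (n + 2)) *
          (∏ k : Fin (n + 2), (X k : MvPolynomial (Fin (n + 2)) ℂ)) ^ (d - 2) := by
        rw [hconst, hX]
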